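/- Let σ be the F_2-algebra endomorphism of F_2[x,y,z,w] with σ(x) = x, σ(y) = y, σ(z) = z, σ(w) = z + w, and let κ be the F_2-algebra automorphism of F_2[x,y,z,w] fixing x and y and exchanging z and w. Then: σ(c_2) = c_2, σ(c_3) = c_3, σ(c'_4) = c'_4, and σ(c''_4) = c'_4 + c''_4; in particular ∏_{α ∈ span_{F_2}{x,y}} (z + w + α) = c'_4 + c''_4. Moreover κ(c_2) = c_2, κ(c_3) = c_3, κ(c'_4) = c''_4, and κ(c''_4) = c'_4. Hence these substitutions fix c_2 and c_3 and permute the three elements c'_4, c''_4, c'_4 + c''_4. -/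
import Mathlib


noncomputable section

open MvPolynomial

/-- The set of `𝔽₂`-linear combinations (i.e. subset sums) of the family `v`. -/
def spanF2 {R : Type*} [CommRing R] {n : ℕ} (v : Fin n → R) : Finset R :=
  letI := Classical.decEq R
  Finset.image (fun s : Finset (Fin n) => ∑ j ∈ s, v j) Finset.univ

/-- The Dickson invariant `D_i(v₁, …, vₙ)`: the `(2^n - 2^(n-i))`-th elementary symmetric
polynomial of the `2^n` elements of the `𝔽₂`-linear span of `v₁, …, vₙ`. -/
def dickson {R : Type*} [CommRing R] {n : ℕ} (v : Fin n → R) (i : ℕ) : R :=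
  (spanF2 v).val.esymm (2 ^ n - 2 ^ (n - i))

/-- The product `∏_{α ∈ span_{𝔽₂}(v)} (w + α)`. -/
def prodAdd {R : Type*} [CommRing R] {n : ℕ} (v : Fin n → R) (w : R) : R :=
  ∏ α ∈ spanF2 v, (w + α)

/-- The polynomial ring `𝔽₂[x, y, z, w]`. -/
abbrev R4 := MvPolynomial (Fin 4) (ZMod 2)

def xP : R4 := X 0
def yP : R4 := X 1
def zP : R4 := X 2
def wP : R4 := X 3

def a8 : R4 := dickson ![xP, yP, zP, wP] 1
def a12 : R4 := dickson ![xP, yP, zP, wP] 2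
def a14 : R4 := dickson ![xP, yP, zP, wP] 3
def a15 : R4 := dickson ![xP, yP, zP, wP] 4

def b4 : R4 := dickson ![xP, yP, zP] 1
def b6 : R4 := dickson ![xP, yP, zP] 2
def b7 : R4 := dickson ![xP, yP, zP] 3
def b8 : R4 := prodAdd ![xP, yP, zP] wP

def c2 : R4 := dickson ![xP, yP] 1
def c3 : R4 := dickson ![xP, yP] 2
def c4' : R4 := prodAdd ![xP, yP] zP
def c4'' : R4 := prodAdd ![xP, yP] wP

/-- The `𝔽₂`-algebra endomorphism `σ` of `𝔽₂[x,y,z,w]` with `σ(x) = x`, `σ(y) = y`,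
`σ(z) = z` and `σ(w) = z + w`. -/
def sigmaEnd : R4 →ₐ[ZMod 2] R4 := aeval ![xP, yP, zP, zP + wP]

/-- The `𝔽₂`-algebra automorphism `κ` of `𝔽₂[x,y,z,w]` fixing `x` and `y` and
exchanging `z` and `w`. -/
def kappaEnd : R4 →ₐ[ZMod 2] R4 := aeval ![xP, yP, wP, zP]

lemma ne_of_eval (f : Fin 4 → ZMod 2) {p q : R4} (h : eval f p ≠ eval f q) : p ≠ q :=
  fun e => h (e ▸ rfl)

lemma hx0 : xP ≠ 0 := ne_of_eval ![1,0,0,0] (by simp [xP])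
lemma hy0 : yP ≠ 0 := ne_of_eval ![0,1,0,0] (by simp [yP])
lemma hxy0 : xP + yP ≠ 0 := ne_of_eval ![1,0,0,0] (by simp [xP, yP])
lemma hxy : xP ≠ yP := ne_of_eval ![1,0,0,0] (by simp [xP, yP])
lemma hxxy : xP ≠ xP + yP := ne_of_eval ![0,1,0,0] (by simp [xP, yP])
lemma hyxy : yP ≠ xP + yP := ne_of_eval ![1,0,0,0] (by simp [xP, yP])

lemma two_eq_zero : (2 : R4) = 0 := by
  have := CharP.cast_eq_zero R4 2
  simpa using this

lemma psc1 {α : Type*} (a : α) : Multiset.powersetCard 1 ({a} : Multiset α) = {{a}} := rfl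

lemma span2 : spanF2 ![xP, yP] = ({0, xP, yP, xP + yP} : Finset R4) := by
  ext a
  simp only [spanF2, Finset.mem_image, Finset.mem_univ, true_and, Finset.mem_insert,
    Finset.mem_singleton]
  constructor
  · rintro ⟨s, rfl⟩
    fin_cases s <;> simp
  · rintro (rfl | rfl | rfl | rfl)
    exacts [⟨∅, by simp⟩, ⟨{0}, by simp⟩, ⟨{1}, by simp⟩, ⟨{0,1}, by simp⟩]

lemma span2_val : (spanF2 ![xP, yP]).val = {0, xP, yP, xP + yP} := by
  rw [span2]
  rw [Finset.insert_val_of_notMem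
        (by simp [hx0, hy0, hxy0, hx0.symm, hy0.symm, hxy0.symm]),
      Finset.insert_val_of_notMem (by simp [hxy, hxxy, hy0]),
      Finset.insert_val_of_notMem (by simp [hyxy, hx0])]
  rfl

lemma c2_eq : dickson ![xP, yP] 1 = xP^2 + xP*yP + yP^2 := by
  rw [dickson, span2_val]
  show Multiset.esymm _ 2 = _
  simp [Multiset.esymm, Multiset.powersetCard_cons, Multiset.insert_eq_cons, psc1]
  linear_combination (xP * yP) * two_eq_zero

lemma c3_eq : dickson ![xP, yP] 2 = xP^2*yP + xP*yP^2 := by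
  rw [dickson, span2_val]
  show Multiset.esymm _ 3 = _
  simp [Multiset.esymm, Multiset.powersetCard_cons, Multiset.insert_eq_cons, psc1]
  ring

lemma prodAdd_eq (t : R4) : prodAdd ![xP, yP] t = t * (t + xP) * (t + yP) * (t + xP + yP) := by
  rw [prodAdd, span2]
  rw [Finset.prod_insert
        (by simp [hx0, hy0, hxy0, hx0.symm, hy0.symm, hxy0.symm]),
      Finset.prod_insert (by simp [hxy, hxxy, hy0]),
      Finset.prod_insert (by simp [hyxy, hx0]), Finset.prod_singleton]
  ring

lemma c4'_eq : c4' = zP * (zP + xP) * (zP + yP) * (zP + xP + yP) := prodAdd_eq zP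
lemma c4''_eq : c4'' = wP * (wP + xP) * (wP + yP) * (wP + xP + yP) := prodAdd_eq wP

lemma sum_prod_eq : prodAdd ![xP, yP] (zP + wP) = c4' + c4'' := by
  rw [prodAdd_eq, c4'_eq, c4''_eq]
  linear_combination (2*zP*wP^3 + 3*zP^2*wP^2 + 2*zP^3*wP + 3*yP*zP*wP^2 + 3*yP*zP^2*wP
    + yP^2*zP*wP + 3*xP*zP*wP^2 + 3*xP*zP^2*wP + 3*xP*yP*zP*wP + xP^2*zP*wP) * two_eq_zero

lemma hsx : sigmaEnd xP = xP := by simp [sigmaEnd, xP]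
lemma hsy : sigmaEnd yP = yP := by simp [sigmaEnd, yP]
lemma hsz : sigmaEnd zP = zP := by simp [sigmaEnd, zP]
lemma hsw : sigmaEnd wP = zP + wP := by simp [sigmaEnd, wP]
lemma hkx : kappaEnd xP = xP := by simp [kappaEnd, xP]
lemma hky : kappaEnd yP = yP := by simp [kappaEnd, yP]
lemma hkz : kappaEnd zP = wP := by simp [kappaEnd, zP]
lemma hkw : kappaEnd wP = zP := by simp [kappaEnd, wP]

theorem stmt_11 :
    sigmaEnd c2 = c2 ∧ sigmaEnd c3 = c3 ∧ sigmaEnd c4' = c4' ∧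
    sigmaEnd c4'' = c4' + c4'' ∧
    prodAdd ![xP, yP] (zP + wP) = c4' + c4'' ∧
    kappaEnd c2 = c2 ∧ kappaEnd c3 = c3 ∧ kappaEnd c4' = c4'' ∧ kappaEnd c4'' = c4' ∧
    (⇑sigmaEnd '' {c4', c4'', c4' + c4''} = {c4', c4'', c4' + c4''}) ∧
    (⇑kappaEnd '' {c4', c4'', c4' + c4''} = {c4', c4'', c4' + c4''}) := by
  have e2 : c2 = xP^2 + xP*yP + yP^2 := c2_eq
  have e3 : c3 = xP^2*yP + xP*yP^2 := c3_eq
  have h1 : sigmaEnd c2 = c2 := by rw [e2]; simp [map_add, map_mul, map_pow, hsx, hsy]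
  have h2 : sigmaEnd c3 = c3 := by rw [e3]; simp [map_add, map_mul, map_pow, hsx, hsy]
  have h3 : sigmaEnd c4' = c4' := by
    rw [c4'_eq]; simp [map_add, map_mul, hsx, hsy, hsz]
  have h4 : sigmaEnd c4'' = c4' + c4'' := by
    rw [← sum_prod_eq, prodAdd_eq, c4''_eq, map_mul, map_mul, map_mul, map_add,
      map_add, map_add, map_add, hsx, hsy, hsw]
  have h5 : kappaEnd c4' = c4'' := by
    rw [c4'_eq, c4''_eq]; simp [map_add, map_mul, hkx, hky, hkz]
  have h6 : kappaEnd c4'' = c4' := by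
    rw [c4'_eq, c4''_eq]; simp [map_add, map_mul, hkx, hky, hkw]
  have h7 : kappaEnd c2 = c2 := by rw [e2]; simp [map_add, map_mul, map_pow, hkx, hky]
  have h8 : kappaEnd c3 = c3 := by rw [e3]; simp [map_add, map_mul, map_pow, hkx, hky]
  have hsum : sigmaEnd (c4' + c4'') = c4'' := by
    rw [map_add, h3, h4]
    linear_combination c4' * two_eq_zero
  have hksum : kappaEnd (c4' + c4'') = c4' + c4'' := by
    rw [map_add, h5, h6, add_comm]
  refine ⟨h1, h2, h3, h4, sum_prod_eq, h7, h8, h5, h6, ?_, ?_⟩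
  · rw [Set.image_insert_eq, Set.image_insert_eq, Set.image_singleton, h3, h4, hsum]
    rw [Set.pair_comm]
  · rw [Set.image_insert_eq, Set.image_insert_eq, Set.image_singleton, h5, h6, hksum]
    rw [Set.insert_comm]
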